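/- For every η > 0 there exists a constant C = C(η, K, T, n, x₀) such that for all y = (y₁, …, yₙ) and y' = (y'₁, …, y'ₙ) in (ℝ^d)ⁿ with max_{1≤k≤n} |y_k| ≤ η and max_{1≤k≤n} |y'_k| ≤ η, one has ‖p_n(y) − p_n(y')‖_∞ ≤ C · max_{1≤k≤n} |y_k − y'_k|. -/

import Mathlib

open MeasureTheory

/-- Sup norm of a path over `[0, T]`. -/
noncomputable def supNorm (d : ℕ) (T : ℝ) (ω : ℝ → EuclideanSpace ℝ (Fin d)) : ℝ :=
  ⨆ u : Set.Icc (0 : ℝ) T, ‖ω u‖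

/-- Frobenius norm of a `d × d` real matrix. -/
noncomputable def frob (d : ℕ) (A : Matrix (Fin d) (Fin d) ℝ) : ℝ :=
  Real.sqrt (∑ i, ∑ j, (A i j) ^ 2)

/-- A matrix acting on a vector of `EuclideanSpace ℝ (Fin d)`. -/
noncomputable def matMulVec (d : ℕ) (A : Matrix (Fin d) (Fin d) ℝ)
    (v : EuclideanSpace ℝ (Fin d)) : EuclideanSpace ℝ (Fin d) :=
  (WithLp.equiv 2 (Fin d → ℝ)).symm (A.mulVec (WithLp.equiv 2 (Fin d → ℝ) v))

/-- The Lipschitz condition on the coefficients `b`, `σ` with respect to the distance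
`d((t,ω),(t',ω')) = ‖ω_t - ω'_{t'}‖_∞ + √|t - t'|`, required over bounded paths. -/
def LipschitzCoeffs (d : ℕ) (T K : ℝ)
    (b : ℝ → (ℝ → EuclideanSpace ℝ (Fin d)) → EuclideanSpace ℝ (Fin d))
    (σ : ℝ → (ℝ → EuclideanSpace ℝ (Fin d)) → Matrix (Fin d) (Fin d) ℝ) : Prop :=
  ∀ t ∈ Set.Icc (0 : ℝ) T, ∀ t' ∈ Set.Icc (0 : ℝ) T,
    ∀ ω ω' : ℝ → EuclideanSpace ℝ (Fin d),
    (∃ M, ∀ u ∈ Set.Icc (0 : ℝ) T, ‖ω u‖ ≤ M) →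
    (∃ M, ∀ u ∈ Set.Icc (0 : ℝ) T, ‖ω' u‖ ≤ M) →
    ‖b t ω - b t' ω'‖ + frob d (σ t ω - σ t' ω')
      ≤ K * (supNorm d T (fun u => ω (min t u) - ω' (min t' u)) + Real.sqrt |t - t'|)

/-- `p` is the piecewise constant Euler path for the coefficients `b, σ`, initial value `x₀`,
time horizon `T`, `n` steps and increments `y`: there are points `x_j` with `x_0 = x₀`,
`x_{j+1} = x_j + b(t_j, p_{t_j}) δ + σ(t_j, p_{t_j}) y_{j+1}` where `t_j = j (T/n)` and
`p_{t_j}` is the path `p` stopped at `t_j`, and `p(s) = x_j` on `[t_j, t_{j+1})`, `p(T) = x_n`. -/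
def IsEulerPath (d n : ℕ) (T : ℝ) (x₀ : EuclideanSpace ℝ (Fin d))
    (b : ℝ → (ℝ → EuclideanSpace ℝ (Fin d)) → EuclideanSpace ℝ (Fin d))
    (σ : ℝ → (ℝ → EuclideanSpace ℝ (Fin d)) → Matrix (Fin d) (Fin d) ℝ)
    (y : Fin n → EuclideanSpace ℝ (Fin d)) (p : ℝ → EuclideanSpace ℝ (Fin d)) : Prop :=
  ∃ x : ℕ → EuclideanSpace ℝ (Fin d),
    x 0 = x₀ ∧
    (∀ j : Fin n, x ((j : ℕ) + 1)
        = x (j : ℕ)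
          + (T / n) • b (((j : ℕ) : ℝ) * (T / n)) (fun u => p (min (((j : ℕ) : ℝ) * (T / n)) u))
          + matMulVec d
              (σ (((j : ℕ) : ℝ) * (T / n)) (fun u => p (min (((j : ℕ) : ℝ) * (T / n)) u))) (y j)) ∧
    (∀ j : Fin n, ∀ s ∈ Set.Ico (((j : ℕ) : ℝ) * (T / n)) ((((j : ℕ) : ℝ) + 1) * (T / n)),
        p s = x (j : ℕ)) ∧
    p T = x n


noncomputable def matToE (d : ℕ) (A : Matrix (Fin d) (Fin d) ℝ) :
    EuclideanSpace ℝ (Fin d × Fin d) :=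
  (WithLp.equiv 2 (Fin d × Fin d → ℝ)).symm (fun q => A q.1 q.2)

lemma frob_eq_norm (d : ℕ) (A : Matrix (Fin d) (Fin d) ℝ) : frob d A = ‖matToE d A‖ := by
  rw [EuclideanSpace.norm_eq, frob, Fintype.sum_prod_type]
  congr 1
  refine Finset.sum_congr rfl fun i _ => Finset.sum_congr rfl fun j _ => ?_
  simp [matToE, sq_abs]

lemma frob_nonneg (d : ℕ) (A : Matrix (Fin d) (Fin d) ℝ) : 0 ≤ frob d A :=
  Real.sqrt_nonneg _

lemma frob_triangle_sub (d : ℕ) (A B : Matrix (Fin d) (Fin d) ℝ) :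
    frob d A ≤ frob d (A - B) + frob d B := by
  rw [frob_eq_norm, frob_eq_norm, frob_eq_norm]
  have h : matToE d A = matToE d (A - B) + matToE d B := by
    ext q; simp [matToE, Matrix.sub_apply]
  rw [h]; exact norm_add_le _ _

lemma norm_matMulVec_le (d : ℕ) (A : Matrix (Fin d) (Fin d) ℝ)
    (v : EuclideanSpace ℝ (Fin d)) : ‖matMulVec d A v‖ ≤ frob d A * ‖v‖ := by
  rw [EuclideanSpace.norm_eq, EuclideanSpace.norm_eq, frob]
  have h1 : ∀ i, ‖matMulVec d A v i‖ ^ 2 ≤ (∑ j, (A i j) ^ 2) * ∑ j, ‖v j‖ ^ 2 := by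
    intro i
    have : matMulVec d A v i = ∑ j, A i j * v j := by
      simp [matMulVec, Matrix.mulVec, dotProduct]
    rw [this, Real.norm_eq_abs, sq_abs]
    calc (∑ j, A i j * v j) ^ 2 ≤ (∑ j, (A i j) ^ 2) * ∑ j, (v j) ^ 2 :=
          Finset.sum_mul_sq_le_sq_mul_sq _ _ _
      _ = (∑ j, (A i j) ^ 2) * ∑ j, ‖v j‖ ^ 2 := by
          congr 1; exact Finset.sum_congr rfl fun j _ => by rw [Real.norm_eq_abs, sq_abs]
  calc Real.sqrt (∑ i, ‖matMulVec d A v i‖ ^ 2)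
      ≤ Real.sqrt (∑ i, (∑ j, (A i j) ^ 2) * ∑ j, ‖v j‖ ^ 2) :=
        Real.sqrt_le_sqrt (Finset.sum_le_sum fun i _ => h1 i)
    _ = Real.sqrt ((∑ i, ∑ j, (A i j) ^ 2) * ∑ j, ‖v j‖ ^ 2) := by rw [← Finset.sum_mul]
    _ = Real.sqrt (∑ i, ∑ j, (A i j) ^ 2) * Real.sqrt (∑ j, ‖v j‖ ^ 2) := by
        rw [Real.sqrt_mul (by positivity)]

lemma matMulVec_sub_left (d : ℕ) (A B : Matrix (Fin d) (Fin d) ℝ)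
    (v : EuclideanSpace ℝ (Fin d)) :
    matMulVec d (A - B) v = matMulVec d A v - matMulVec d B v := by
  ext i; simp [matMulVec, Matrix.sub_mulVec]

lemma matMulVec_sub_right (d : ℕ) (A : Matrix (Fin d) (Fin d) ℝ)
    (v w : EuclideanSpace ℝ (Fin d)) :
    matMulVec d A (v - w) = matMulVec d A v - matMulVec d A w := by
  ext i
  have : (WithLp.equiv 2 (Fin d → ℝ)) (v - w) = (WithLp.equiv 2 (Fin d → ℝ)) v - (WithLp.equiv 2 (Fin d → ℝ)) w := rfl
  simp [matMulVec, this, Matrix.mulVec_sub]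

set_option maxHeartbeats 4000000 in
/-- For every `η > 0` there is a constant `C = C(η, K, T, n, x₀)` such that whenever all
increments `y_k`, `y'_k` have norm at most `η`,
`‖p_n(y) − p_n(y')‖_∞ ≤ C · max_k |y_k − y'_k|`. -/
theorem local_lipschitz_of_euler_path
    (d n : ℕ) (hd : 1 ≤ d) (hn : 1 ≤ n) (T : ℝ) (hT : 0 < T)
    (x₀ : EuclideanSpace ℝ (Fin d))
    (b : ℝ → (ℝ → EuclideanSpace ℝ (Fin d)) → EuclideanSpace ℝ (Fin d))
    (σ : ℝ → (ℝ → EuclideanSpace ℝ (Fin d)) → Matrix (Fin d) (Fin d) ℝ)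
    (K : ℝ) (hK : 0 < K) (hLip : LipschitzCoeffs d T K b σ)
    (p : (Fin n → EuclideanSpace ℝ (Fin d)) → ℝ → EuclideanSpace ℝ (Fin d))
    (hp : ∀ y, IsEulerPath d n T x₀ b σ y (p y)) :
    ∀ η : ℝ, 0 < η → ∃ C : ℝ,
      ∀ y y' : Fin n → EuclideanSpace ℝ (Fin d),
        (∀ k, ‖y k‖ ≤ η) → (∀ k, ‖y' k‖ ≤ η) →
        supNorm d T (fun u => p y u - p y' u) ≤ C * ⨆ k, ‖y k - y' k‖ := by
  intro η hη
  have hn0 : (0:ℝ) < (n:ℝ) := by exact_mod_cast hn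
  have hδ : 0 < T / n := div_pos hT hn0
  have hTn : (n:ℝ) * (T / n) = T := by field_simp
  have hsT0 : 0 ≤ Real.sqrt T := Real.sqrt_nonneg T
  set C₀ : ℝ := ‖b 0 (fun _ => x₀)‖ + frob d (σ 0 (fun _ => x₀)) with hC₀def
  have hC₀0 : 0 ≤ C₀ := add_nonneg (norm_nonneg _) (frob_nonneg _ _)
  set c : ℝ := (T / n + η) * (C₀ + K * Real.sqrt T) with hcdef
  have hc0 : 0 ≤ c := mul_nonneg (by linarith) (by linarith [mul_nonneg hK.le hsT0])
  set a : ℝ := 2 + 2 * K * (T / n + η) with hadef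
  have ha1 : (1:ℝ) ≤ a := by rw [hadef]; linarith [mul_nonneg hK.le hδ.le, mul_nonneg hK.le hη.le]
  set R : ℝ := (‖x₀‖ + c) * a ^ n with hRdef
  have hx₀c : 0 ≤ ‖x₀‖ + c := add_nonneg (norm_nonneg _) hc0
  have hR0 : 0 ≤ R := mul_nonneg hx₀c (pow_nonneg (by linarith) n)
  set S : ℝ := C₀ + K * (R + ‖x₀‖ + Real.sqrt T) with hSdef
  have hS0 : 0 ≤ S := by
    have h := mul_nonneg hK.le (show (0:ℝ) ≤ R + ‖x₀‖ + Real.sqrt T by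
      linarith [norm_nonneg x₀])
    linarith
  set A : ℝ := 2 + K * (T / n) + K * η with hAdef
  have hA1 : (1:ℝ) ≤ A := by rw [hAdef]; linarith [mul_nonneg hK.le hδ.le, mul_nonneg hK.le hη.le]
  clear_value C₀ c a R S A
  refine ⟨S * A ^ n, ?_⟩
  intro y y' hy hy'
  haveI : Nonempty (Set.Icc (0:ℝ) T) := ⟨⟨0, le_refl _, hT.le⟩⟩
  -- the index of the Euler step containing a given time s
  have valIdx : ∀ s : ℝ, 0 ≤ s → s ≤ T → ∃ i : ℕ, i ≤ n ∧ (i:ℝ) * (T / n) ≤ s ∧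
      ∀ (q : ℝ → EuclideanSpace ℝ (Fin d)) (xz : ℕ → EuclideanSpace ℝ (Fin d)),
        (∀ j : Fin n, ∀ u ∈ Set.Ico (((j : ℕ) : ℝ) * (T / n)) ((((j : ℕ) : ℝ) + 1) * (T / n)),
          q u = xz (j : ℕ)) →
        q T = xz n → q s = xz i := by
    intro s hs0 hsT
    by_cases hsT' : s = T
    · refine ⟨n, le_refl n, ?_, fun q xz hval hqT => by rw [hsT', hqT]⟩
      rw [hsT']; exact le_of_eq hTn
    · have hslt : s < T := lt_of_le_of_ne hsT hsT'
      have hsd0 : 0 ≤ s / (T / n) := div_nonneg hs0 hδ.le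
      have hi_lt : ⌊s / (T / n)⌋₊ < n := by
        rw [Nat.floor_lt hsd0, div_lt_iff₀ hδ]
        calc s < T := hslt
          _ = (n:ℝ) * (T / n) := hTn.symm
      have h1 : ((⌊s / (T / n)⌋₊ : ℕ) : ℝ) * (T / n) ≤ s := by
        have h := Nat.floor_le hsd0
        calc ((⌊s / (T / n)⌋₊ : ℕ) : ℝ) * (T / n) ≤ (s / (T / n)) * (T / n) :=
              mul_le_mul_of_nonneg_right h hδ.le
          _ = s := div_mul_cancel₀ s hδ.ne'
      have h2 : s < (((⌊s / (T / n)⌋₊ : ℕ) : ℝ) + 1) * (T / n) := by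
        have h := Nat.lt_floor_add_one (s / (T / n))
        calc s = (s / (T / n)) * (T / n) := (div_mul_cancel₀ s hδ.ne').symm
          _ < (((⌊s / (T / n)⌋₊ : ℕ) : ℝ) + 1) * (T / n) := mul_lt_mul_of_pos_right h hδ
      exact ⟨⌊s / (T / n)⌋₊, hi_lt.le, h1,
        fun q xz hval hqT => hval ⟨⌊s / (T / n)⌋₊, hi_lt⟩ s ⟨h1, h2⟩⟩
  -- a crude bound for any Euler path in terms of its nodes
  have qbd : ∀ (q : ℝ → EuclideanSpace ℝ (Fin d)) (xz : ℕ → EuclideanSpace ℝ (Fin d)),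
      (∀ j : Fin n, ∀ u ∈ Set.Ico (((j : ℕ) : ℝ) * (T / n)) ((((j : ℕ) : ℝ) + 1) * (T / n)),
        q u = xz (j : ℕ)) →
      q T = xz n → ∀ s, 0 ≤ s → s ≤ T → ‖q s‖ ≤ ∑ i ∈ Finset.range (n + 1), ‖xz i‖ := by
    intro q xz hval hqT s hs0 hsT
    obtain ⟨i, hin, -, hq⟩ := valIdx s hs0 hsT
    rw [hq q xz hval hqT]
    exact Finset.single_le_sum (fun j _ => norm_nonneg _) (Finset.mem_range.2 (by omega))
  have bddstop : ∀ (q : ℝ → EuclideanSpace ℝ (Fin d)) (xz : ℕ → EuclideanSpace ℝ (Fin d)),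
      (∀ j : Fin n, ∀ u ∈ Set.Ico (((j : ℕ) : ℝ) * (T / n)) ((((j : ℕ) : ℝ) + 1) * (T / n)),
        q u = xz (j : ℕ)) →
      q T = xz n → ∀ t : ℝ, 0 ≤ t →
      ∃ M, ∀ u ∈ Set.Icc (0:ℝ) T, ‖(fun v => q (min t v)) u‖ ≤ M := by
    intro q xz hval hqT t ht0
    exact ⟨∑ i ∈ Finset.range (n + 1), ‖xz i‖, fun u hu =>
      qbd q xz hval hqT _ (le_min ht0 hu.1) (le_trans (min_le_right _ _) hu.2)⟩
  have bddconst : ∃ M, ∀ u ∈ Set.Icc (0:ℝ) T, ‖(fun _ : ℝ => x₀) u‖ ≤ M :=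
    ⟨‖x₀‖, fun u _ => le_refl _⟩
  -- a priori bound on the nodes of any Euler path with increments bounded by η
  have apriori : ∀ (z : Fin n → EuclideanSpace ℝ (Fin d)), (∀ k, ‖z k‖ ≤ η) →
      ∀ (q : ℝ → EuclideanSpace ℝ (Fin d)) (xz : ℕ → EuclideanSpace ℝ (Fin d)),
      xz 0 = x₀ →
      (∀ j : Fin n, xz ((j : ℕ) + 1)
          = xz (j : ℕ)
            + (T / n) • b (((j : ℕ) : ℝ) * (T / n)) (fun u => q (min (((j : ℕ) : ℝ) * (T / n)) u))
            + matMulVec d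
                (σ (((j : ℕ) : ℝ) * (T / n))
                  (fun u => q (min (((j : ℕ) : ℝ) * (T / n)) u))) (z j)) →
      (∀ j : Fin n, ∀ u ∈ Set.Ico (((j : ℕ) : ℝ) * (T / n)) ((((j : ℕ) : ℝ) + 1) * (T / n)),
        q u = xz (j : ℕ)) →
      q T = xz n →
      ∀ j, j ≤ n → ∀ i, i ≤ j → ‖xz i‖ + c ≤ (‖x₀‖ + c) * a ^ j := by
    intro z hz q xz hxz0 hrec hval hqT j
    induction j with
    | zero =>
      intro _ i hi
      have hi0 : i = 0 := Nat.le_zero.mp hi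
      rw [hi0, hxz0, pow_zero, mul_one]
    | succ j ih =>
      intro hj1 i hi
      have hjn : j ≤ n := by omega
      have hjlt : j < n := by omega
      have IH := ih hjn
      have hQ1 : (1:ℝ) ≤ a ^ j := one_le_pow₀ ha1
      by_cases hij : i ≤ j
      · refine le_trans (IH i hij) ?_
        exact mul_le_mul_of_nonneg_left (pow_le_pow_right₀ ha1 (by omega)) hx₀c
      · have hij' : i = j + 1 := by omega
        subst hij'
        have hrecj := hrec ⟨j, hjlt⟩
        have hvalq := hval
        simp only [Fin.val_mk] at hrecj
        set t : ℝ := ((j : ℕ) : ℝ) * (T / n) with htdef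
        have ht0 : 0 ≤ t := by rw [htdef]; positivity
        have htT : t ≤ T := by
          have h : ((j : ℕ) : ℝ) * (T / n) ≤ (n:ℝ) * (T / n) :=
            mul_le_mul_of_nonneg_right (by exact_mod_cast hjn) hδ.le
          rw [hTn] at h; linarith [htdef.le, htdef.ge]
        set N : ℝ := (‖x₀‖ + c) * a ^ j - c with hNdef
        clear_value N
        have hNc : N + c = (‖x₀‖ + c) * a ^ j := by rw [hNdef]; ring
        have hNx : ‖x₀‖ ≤ N := by linarith [mul_nonneg hx₀c (sub_nonneg.2 hQ1)]
        have hN0 : 0 ≤ N := le_trans (norm_nonneg _) hNx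
        have hIHj : ‖xz j‖ ≤ N := by have := IH j (le_refl j); linarith
        -- bound on the coefficients at (t, stopped path)
        have hbσ : ‖b t (fun u => q (min t u)) - b 0 (fun _ : ℝ => x₀)‖
            + frob d (σ t (fun u => q (min t u)) - σ 0 (fun _ : ℝ => x₀))
            ≤ K * ((N + ‖x₀‖) + Real.sqrt T) := by
          refine le_trans (hLip t ⟨ht0, htT⟩ 0 ⟨le_refl _, hT.le⟩ (fun u => q (min t u))
            (fun _ : ℝ => x₀) (bddstop q xz hval hqT t ht0) bddconst) ?_
          refine mul_le_mul_of_nonneg_left (add_le_add ?_ ?_) hK.le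
          · unfold supNorm
            refine ciSup_le fun u => ?_
            have hm0 : 0 ≤ min t (u:ℝ) := le_min ht0 u.2.1
            have hmT : min t (u:ℝ) ≤ T := le_trans (min_le_right _ _) u.2.2
            obtain ⟨i', hi'n, hi'le, hq⟩ := valIdx (min t u) hm0 hmT
            have hcol : min t (min t (u:ℝ)) = min t (u:ℝ) := by rw [← min_assoc, min_self]
            have hi'j : i' ≤ j := by
              have h' : ((i' : ℕ) : ℝ) * (T / n) ≤ ((j : ℕ) : ℝ) * (T / n) := by
                rw [← htdef]; exact le_trans hi'le (min_le_left _ _)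
              exact_mod_cast le_of_mul_le_mul_right h' hδ
            show ‖q (min t (min t (u:ℝ))) - x₀‖ ≤ N + ‖x₀‖
            rw [hcol, hq q xz hval hqT]
            have := IH i' hi'j
            calc ‖xz i' - x₀‖ ≤ ‖xz i'‖ + ‖x₀‖ := norm_sub_le _ _
              _ ≤ N + ‖x₀‖ := by linarith
          · rw [sub_zero, abs_of_nonneg ht0]
            exact Real.sqrt_le_sqrt htT
        have hfr0 : 0 ≤ frob d (σ t (fun u => q (min t u)) - σ 0 (fun _ : ℝ => x₀)) :=
          frob_nonneg _ _
        have hb0n : 0 ≤ ‖b t (fun u => q (min t u)) - b 0 (fun _ : ℝ => x₀)‖ := norm_nonneg _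
        have hfr0' : 0 ≤ frob d (σ 0 (fun _ : ℝ => x₀)) := frob_nonneg _ _
        have hbn0' : 0 ≤ ‖b 0 (fun _ : ℝ => x₀)‖ := norm_nonneg _
        have hbb : ‖b t (fun u => q (min t u))‖ ≤ C₀ + K * (N + ‖x₀‖ + Real.sqrt T) := by
          have htri : ‖b t (fun u => q (min t u))‖
              ≤ ‖b t (fun u => q (min t u)) - b 0 (fun _ : ℝ => x₀)‖
                + ‖b 0 (fun _ : ℝ => x₀)‖ := by
            have h := norm_add_le (b t (fun u => q (min t u)) - b 0 (fun _ : ℝ => x₀))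
              (b 0 (fun _ : ℝ => x₀))
            rwa [sub_add_cancel] at h
          linarith
        have hσb : frob d (σ t (fun u => q (min t u))) ≤ C₀ + K * (N + ‖x₀‖ + Real.sqrt T) := by
          have htri := frob_triangle_sub d (σ t (fun u => q (min t u))) (σ 0 (fun _ : ℝ => x₀))
          linarith
        have hG0 : 0 ≤ C₀ + K * (N + ‖x₀‖ + Real.sqrt T) := by
          have h := mul_nonneg hK.le (show (0:ℝ) ≤ N + ‖x₀‖ + Real.sqrt T by
            linarith [norm_nonneg x₀])
          linarith
        have hrecnorm : ‖xz (j + 1)‖ ≤ ‖xz j‖ + (T / n) * ‖b t (fun u => q (min t u))‖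
            + frob d (σ t (fun u => q (min t u))) * ‖z ⟨j, hjlt⟩‖ := by
          rw [hrecj]
          calc ‖xz j + (T / n) • b t (fun u => q (min t u))
                + matMulVec d (σ t (fun u => q (min t u))) (z ⟨j, hjlt⟩)‖
              ≤ ‖xz j‖ + ‖(T / n) • b t (fun u => q (min t u))‖
                + ‖matMulVec d (σ t (fun u => q (min t u))) (z ⟨j, hjlt⟩)‖ := norm_add₃_le
            _ ≤ _ := by
                rw [norm_smul, Real.norm_eq_abs, abs_of_pos hδ]
                exact add_le_add_right (norm_matMulVec_le _ _ _) _
        have hzj : ‖z ⟨j, hjlt⟩‖ ≤ η := hz _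
        have hzj0 : 0 ≤ ‖z ⟨j, hjlt⟩‖ := norm_nonneg _
        have hm1 : (T / n) * ‖b t (fun u => q (min t u))‖
            ≤ (T / n) * (C₀ + K * (N + ‖x₀‖ + Real.sqrt T)) :=
          mul_le_mul_of_nonneg_left hbb hδ.le
        have hm2 : frob d (σ t (fun u => q (min t u))) * ‖z ⟨j, hjlt⟩‖
            ≤ (C₀ + K * (N + ‖x₀‖ + Real.sqrt T)) * η :=
          mul_le_mul hσb hzj hzj0 hG0
        rw [pow_succ, ← mul_assoc, ← hNc, hadef]
        have hp1 : 0 ≤ K * (T / n) * (N - ‖x₀‖) :=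
          mul_nonneg (mul_nonneg hK.le hδ.le) (by linarith)
        have hp2 : 0 ≤ K * η * (N - ‖x₀‖) :=
          mul_nonneg (mul_nonneg hK.le hη.le) (by linarith)
        have hp3 : 0 ≤ K * (T / n) * c := mul_nonneg (mul_nonneg hK.le hδ.le) hc0
        have hp4 : 0 ≤ K * η * c := mul_nonneg (mul_nonneg hK.le hη.le) hc0
        linarith [hrecnorm, hm1, hm2, hIHj, hp1, hp2, hp3, hp4, hc0, hN0,
          mul_nonneg hx₀c (sub_nonneg.2 hQ1)]
  -- the two Euler paths
  obtain ⟨x, hx0, hxrec, hxval, hxT⟩ := hp y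
  obtain ⟨x', hx0', hxrec', hxval', hxT'⟩ := hp y'
  have hxR' : ∀ i, i ≤ n → ‖x' i‖ ≤ R - c := by
    intro i hin
    have := apriori y' hy' (p y') x' hx0' hxrec' hxval' hxT' n (le_refl n) i hin
    rw [hRdef]; linarith
  set ε : ℝ := ⨆ k, ‖y k - y' k‖ with hεdef
  have hbddr : BddAbove (Set.range fun k => ‖y k - y' k‖) := (Set.finite_range _).bddAbove
  have hεk : ∀ k, ‖y k - y' k‖ ≤ ε := fun k => le_ciSup hbddr k
  have hε0 : 0 ≤ ε := le_trans (norm_nonneg _) (hεk ⟨0, hn⟩)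
  have hSε0 : 0 ≤ S * ε := mul_nonneg hS0 hε0
  clear_value ε
  -- main induction
  have hmain : ∀ j, j ≤ n → ∀ i, i ≤ j → ‖x i - x' i‖ + S * ε ≤ S * ε * A ^ j := by
    intro j
    induction j with
    | zero =>
      intro _ i hi
      have hi0 : i = 0 := Nat.le_zero.mp hi
      rw [hi0, hx0, hx0', sub_self, norm_zero, pow_zero, mul_one]
      linarith
    | succ j ih =>
      intro hj1 i hi
      have hjn : j ≤ n := by omega
      have hjlt : j < n := by omega
      have IH := ih hjn
      have hQ1 : (1:ℝ) ≤ A ^ j := one_le_pow₀ hA1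
      by_cases hij : i ≤ j
      · refine le_trans (IH i hij) ?_
        exact mul_le_mul_of_nonneg_left (pow_le_pow_right₀ hA1 (by omega)) hSε0
      · have hij' : i = j + 1 := by omega
        subst hij'
        have hrecj := hxrec ⟨j, hjlt⟩
        have hrecj' := hxrec' ⟨j, hjlt⟩
        simp only [Fin.val_mk] at hrecj hrecj'
        set t : ℝ := ((j : ℕ) : ℝ) * (T / n) with htdef
        have ht0 : 0 ≤ t := by rw [htdef]; positivity
        have htT : t ≤ T := by
          have h : ((j : ℕ) : ℝ) * (T / n) ≤ (n:ℝ) * (T / n) :=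
            mul_le_mul_of_nonneg_right (by exact_mod_cast hjn) hδ.le
          rw [hTn] at h; linarith [htdef.le, htdef.ge]
        set B : ℝ := S * ε * A ^ j - S * ε with hBdef
        clear_value B
        have hB0 : 0 ≤ B := by
          rw [hBdef]
          linarith [mul_nonneg hSε0 (sub_nonneg.2 hQ1)]
        -- difference of coefficients
        have hΔ : ‖b t (fun u => p y (min t u)) - b t (fun u => p y' (min t u))‖
            + frob d (σ t (fun u => p y (min t u)) - σ t (fun u => p y' (min t u)))
            ≤ K * B := by
          refine le_trans (hLip t ⟨ht0, htT⟩ t ⟨ht0, htT⟩ (fun u => p y (min t u))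
            (fun u => p y' (min t u)) (bddstop (p y) x hxval hxT t ht0)
            (bddstop (p y') x' hxval' hxT' t ht0)) ?_
          have h0 : Real.sqrt |t - t| = 0 := by simp
          rw [h0, add_zero]
          refine mul_le_mul_of_nonneg_left ?_ hK.le
          unfold supNorm
          refine ciSup_le fun u => ?_
          have hm0 : 0 ≤ min t (u:ℝ) := le_min ht0 u.2.1
          have hmT : min t (u:ℝ) ≤ T := le_trans (min_le_right _ _) u.2.2
          obtain ⟨i', hi'n, hi'le, hq⟩ := valIdx (min t u) hm0 hmT
          have hcol : min t (min t (u:ℝ)) = min t (u:ℝ) := by rw [← min_assoc, min_self]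
          have hi'j : i' ≤ j := by
            have h' : ((i' : ℕ) : ℝ) * (T / n) ≤ ((j : ℕ) : ℝ) * (T / n) := by
              rw [← htdef]; exact le_trans hi'le (min_le_left _ _)
            exact_mod_cast le_of_mul_le_mul_right h' hδ
          show ‖p y (min t (min t (u:ℝ))) - p y' (min t (min t (u:ℝ)))‖ ≤ B
          rw [hcol, hq (p y) x hxval hxT, hq (p y') x' hxval' hxT']
          have := IH i' hi'j
          rw [hBdef]; linarith
        -- bound on σ at (t, stopped p y')
        have hσ'S : frob d (σ t (fun u => p y' (min t u))) ≤ S := by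
          have hbσ' : ‖b t (fun u => p y' (min t u)) - b 0 (fun _ : ℝ => x₀)‖
              + frob d (σ t (fun u => p y' (min t u)) - σ 0 (fun _ : ℝ => x₀))
              ≤ K * ((R - c + ‖x₀‖) + Real.sqrt T) := by
            refine le_trans (hLip t ⟨ht0, htT⟩ 0 ⟨le_refl _, hT.le⟩ (fun u => p y' (min t u))
              (fun _ : ℝ => x₀) (bddstop (p y') x' hxval' hxT' t ht0) bddconst) ?_
            refine mul_le_mul_of_nonneg_left (add_le_add ?_ ?_) hK.le
            · unfold supNorm
              refine ciSup_le fun u => ?_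
              have hm0 : 0 ≤ min t (u:ℝ) := le_min ht0 u.2.1
              have hmT : min t (u:ℝ) ≤ T := le_trans (min_le_right _ _) u.2.2
              obtain ⟨i', hi'n, hi'le, hq⟩ := valIdx (min t u) hm0 hmT
              have hcol : min t (min t (u:ℝ)) = min t (u:ℝ) := by rw [← min_assoc, min_self]
              show ‖p y' (min t (min t (u:ℝ))) - x₀‖ ≤ R - c + ‖x₀‖
              rw [hcol, hq (p y') x' hxval' hxT']
              have := hxR' i' hi'n
              calc ‖x' i' - x₀‖ ≤ ‖x' i'‖ + ‖x₀‖ := norm_sub_le _ _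
                _ ≤ R - c + ‖x₀‖ := by linarith
            · rw [sub_zero, abs_of_nonneg ht0]
              exact Real.sqrt_le_sqrt htT
          have htri := frob_triangle_sub d (σ t (fun u => p y' (min t u)))
            (σ 0 (fun _ : ℝ => x₀))
          have h1 : 0 ≤ ‖b t (fun u => p y' (min t u)) - b 0 (fun _ : ℝ => x₀)‖ :=
            norm_nonneg _
          have h2 : 0 ≤ ‖b 0 (fun _ : ℝ => x₀)‖ := norm_nonneg _
          have h3 : 0 ≤ K * c := mul_nonneg hK.le hc0
          rw [hSdef]; linarith
        -- recursion for the difference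
        have keyeq : x (j + 1) - x' (j + 1)
            = (x j - x' j)
              + (T / n) • (b t (fun u => p y (min t u)) - b t (fun u => p y' (min t u)))
              + (matMulVec d (σ t (fun u => p y (min t u)) - σ t (fun u => p y' (min t u)))
                  (y ⟨j, hjlt⟩)
                 + matMulVec d (σ t (fun u => p y' (min t u))) (y ⟨j, hjlt⟩ - y' ⟨j, hjlt⟩)) := by
          rw [hrecj, hrecj', matMulVec_sub_left, matMulVec_sub_right, smul_sub]
          abel
        have hnorm : ‖x (j + 1) - x' (j + 1)‖
            ≤ ‖x j - x' j‖
              + (T / n) * ‖b t (fun u => p y (min t u)) - b t (fun u => p y' (min t u))‖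
              + (frob d (σ t (fun u => p y (min t u)) - σ t (fun u => p y' (min t u)))
                  * ‖y ⟨j, hjlt⟩‖
                 + frob d (σ t (fun u => p y' (min t u))) * ‖y ⟨j, hjlt⟩ - y' ⟨j, hjlt⟩‖) := by
          rw [keyeq]
          calc ‖(x j - x' j)
              + (T / n) • (b t (fun u => p y (min t u)) - b t (fun u => p y' (min t u)))
              + (matMulVec d (σ t (fun u => p y (min t u)) - σ t (fun u => p y' (min t u)))
                  (y ⟨j, hjlt⟩)
                 + matMulVec d (σ t (fun u => p y' (min t u))) (y ⟨j, hjlt⟩ - y' ⟨j, hjlt⟩))‖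
              ≤ ‖x j - x' j‖
                + ‖(T / n) • (b t (fun u => p y (min t u)) - b t (fun u => p y' (min t u)))‖
                + ‖matMulVec d (σ t (fun u => p y (min t u)) - σ t (fun u => p y' (min t u)))
                    (y ⟨j, hjlt⟩)
                   + matMulVec d (σ t (fun u => p y' (min t u)))
                      (y ⟨j, hjlt⟩ - y' ⟨j, hjlt⟩)‖ := norm_add₃_le
            _ ≤ _ := by
                rw [norm_smul, Real.norm_eq_abs, abs_of_pos hδ]
                refine add_le_add_right (le_trans (norm_add_le _ _)
                  (add_le_add (norm_matMulVec_le _ _ _) (norm_matMulVec_le _ _ _))) _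
        -- assemble
        have hfr0 : 0 ≤ frob d (σ t (fun u => p y (min t u)) - σ t (fun u => p y' (min t u))) :=
          frob_nonneg _ _
        have hbn : 0 ≤ ‖b t (fun u => p y (min t u)) - b t (fun u => p y' (min t u))‖ :=
          norm_nonneg _
        have hKB0 : 0 ≤ K * B := mul_nonneg hK.le hB0
        have hm1 : (T / n) * ‖b t (fun u => p y (min t u)) - b t (fun u => p y' (min t u))‖
            ≤ (T / n) * (K * B) := mul_le_mul_of_nonneg_left (by linarith) hδ.le
        have hm2 : frob d (σ t (fun u => p y (min t u)) - σ t (fun u => p y' (min t u)))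
            * ‖y ⟨j, hjlt⟩‖ ≤ (K * B) * η :=
          mul_le_mul (by linarith) (hy _) (norm_nonneg _) hKB0
        have hm3 : frob d (σ t (fun u => p y' (min t u))) * ‖y ⟨j, hjlt⟩ - y' ⟨j, hjlt⟩‖
            ≤ S * ε := mul_le_mul hσ'S (hεk _) (norm_nonneg _) hS0
        have hIHj : ‖x j - x' j‖ ≤ B := by
          have := IH j (le_refl j); rw [hBdef]; linarith
        have hm6 : S * ε ≤ S * ε * A ^ j := le_mul_of_one_le_right hSε0 hQ1
        have hm4 : (T / n) * (K * B) ≤ (T / n) * K * (S * ε * A ^ j - S * ε) := by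
          rw [hBdef]; ring_nf; exact le_refl _
        have hm5 : (K * B) * η ≤ K * η * (S * ε * A ^ j - S * ε) := by
          rw [hBdef]; ring_nf; exact le_refl _
        have hp3 : 0 ≤ K * (T / n) * (S * ε) := by positivity
        have hp4 : 0 ≤ K * η * (S * ε) := by positivity
        have hgoal : S * ε * A ^ (j + 1)
            = S * ε * A ^ j * 2 + K * (T / n) * (S * ε * A ^ j) + K * η * (S * ε * A ^ j) := by
          rw [pow_succ, hAdef]; ring
        rw [hgoal]
        linarith [hnorm, hm1, hm2, hm3, hm4, hm5, hm6, hp3, hp4, hIHj]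
  -- conclude
  show supNorm d T (fun u => p y u - p y' u) ≤ S * A ^ n * ε
  unfold supNorm
  refine ciSup_le fun u => ?_
  obtain ⟨i, hin, -, hq⟩ := valIdx u u.2.1 u.2.2
  show ‖p y ↑u - p y' ↑u‖ ≤ S * A ^ n * ε
  rw [hq (p y) x hxval hxT, hq (p y') x' hxval' hxT']
  have := hmain n (le_refl n) i hin
  linarith [hSε0]
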